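/- Let O be a complete discrete valuation ring with uniformizer π, and let C^• be a cochain complex of flat, separated, π-adically complete O-modules with O-linear boundary maps ∂. Let C̄^• = C^•/πC^• be the reduction mod π. If H^i(C̄^•) = 0, then H^i(C^•) = 0. -/

import Mathlib

/-- Let `O` be a complete discrete valuation ring with uniformizer `π`, and let
`(C^•, d)` be a cochain complex of flat (π-torsion-free), separated, π-adically
complete `O`-modules.  If `H^{i+1}(C̄^•) = 0`, where `C̄^• = C^•/πC^•` (i.e. every
`ω ∈ C^{i+1}` whose coboundary lies in `πC^{i+2}` can be written `ω = dη + πξ`),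
then `H^{i+1}(C^•) = 0`: every cocycle of `C^{i+1}` is a coboundary. -/
theorem stmt3
    (O : Type) [CommRing O] [IsDomain O] [IsDiscreteValuationRing O]
    (π : O) (hπ : Irreducible π)
    [IsAdicComplete (Ideal.span {π}) O]
    (C : ℤ → Type) [∀ i, AddCommGroup (C i)] [∀ i, Module O (C i)]
    (d : ∀ i, C i →ₗ[O] C (i + 1))
    (hdd : ∀ i (x : C i), d (i + 1) (d i x) = 0)
    (hflat : ∀ i (x : C i), π • x = 0 → x = 0)
    [∀ i, IsAdicComplete (Ideal.span {π}) (C i)]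
    (i : ℤ)
    (hHbar : ∀ ω : C (i + 1), (∃ z, d (i + 1) ω = π • z) →
      ∃ (η : C i) (ξ : C (i + 1)), ω = d i η + π • ξ) :
    ∀ ω : C (i + 1), d (i + 1) ω = 0 → ∃ η : C i, ω = d i η := by
  intro ω hω
  set I : Ideal O := Ideal.span {π} with hI
  -- one step of the approximation
  have key : ∀ ξ : C (i+1), d (i+1) ξ = 0 →
      ∃ (η : C i) (ξ' : C (i+1)), ξ = d i η + π • ξ' ∧ d (i+1) ξ' = 0 := by
    intro ξ hξ
    obtain ⟨η, ξ', hξ'⟩ := hHbar ξ ⟨0, by simp [hξ]⟩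
    refine ⟨η, ξ', hξ', ?_⟩
    apply hflat (i+1+1)
    have h2 : d (i+1) ξ = d (i+1) (d i η) + π • d (i+1) ξ' := by
      rw [hξ']; simp
    rw [hξ, hdd] at h2
    simpa using h2.symm
  choose η' ξ' hstep hcoc using
    fun (p : {x : C (i+1) // d (i+1) x = 0}) => key p.1 p.2
  -- the sequence of cocycles
  let ξseq : ℕ → {x : C (i+1) // d (i+1) x = 0} :=
    fun n => Nat.rec ⟨ω, hω⟩ (fun _ p => ⟨ξ' p, hcoc p⟩) n
  let ηseq : ℕ → C i := fun n => η' (ξseq n)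
  have hξsucc : ∀ n, (ξseq (n+1)).1 = ξ' (ξseq n) := fun n => rfl
  -- partial sums
  let s : ℕ → C i := fun n => ∑ k ∈ Finset.range n, π ^ k • ηseq k
  have hinv : ∀ n, ω = d i (s n) + π ^ n • (ξseq n).1 := by
    intro n
    induction n with
    | zero =>
      show ω = d i (s 0) + π ^ 0 • (ξseq 0).1
      simp only [s, Finset.range_zero, Finset.sum_empty, map_zero, pow_zero, one_smul, zero_add]
      exact rfl
    | succ n ih =>
      have h1 : (ξseq n).1 = d i (ηseq n) + π • (ξseq (n+1)).1 := by
        rw [hξsucc]; exact hstep (ξseq n)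
      have hs : s (n+1) = s n + π ^ n • ηseq n := Finset.sum_range_succ _ n
      rw [ih, h1, hs]
      simp only [map_add, map_smul, smul_add, smul_smul, pow_succ]
      abel
  -- precompleteness gives a limit of the partial sums
  have hcau : ∀ {m n : ℕ}, m ≤ n → s m ≡ s n [SMOD (I ^ m • ⊤ : Submodule O (C i))] := by
    intro m n hmn
    rw [SModEq.sub_mem]
    have hsplit : (∑ k ∈ Finset.Ico 0 m, π ^ k • ηseq k)
        + ∑ k ∈ Finset.Ico m n, π ^ k • ηseq k
        = ∑ k ∈ Finset.Ico 0 n, π ^ k • ηseq k :=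
      Finset.sum_Ico_consecutive _ (Nat.zero_le m) hmn
    have hdiff : s m - s n = -∑ k ∈ Finset.Ico m n, π ^ k • ηseq k := by
      simp only [s, Finset.range_eq_Ico]
      rw [← hsplit]; abel
    rw [hdiff]
    refine neg_mem (Submodule.sum_mem _ fun k hk => ?_)
    obtain ⟨j, rfl⟩ := Nat.exists_eq_add_of_le (Finset.mem_Ico.mp hk).1
    rw [pow_add, mul_smul]
    exact Submodule.smul_mem_smul
      (Ideal.pow_mem_pow (Ideal.mem_span_singleton_self π) m) Submodule.mem_top
  obtain ⟨L, hL⟩ := IsPrecomplete.prec (IsAdicComplete.toIsPrecomplete (I := I) (M := C i)) hcau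
  refine ⟨L, ?_⟩
  -- separatedness: ω - d L lies in every π^n C^{i+1}
  have : ω - d i L = 0 := by
    refine IsHausdorff.haus (IsAdicComplete.toIsHausdorff (I := I) (M := C (i+1))) _ fun n => ?_
    rw [SModEq.zero]
    have h1 : ω - d i L = d i (s n - L) + π ^ n • (ξseq n).1 := by
      rw [map_sub]; rw [hinv n]; abel
    rw [h1]
    refine add_mem ?_ ?_
    · have hm : s n - L ∈ (I ^ n • ⊤ : Submodule O (C i)) := (SModEq.sub_mem).mp (hL n)
      have := Submodule.map_smul'' (I ^ n) (⊤ : Submodule O (C i)) (d i)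
      have h2 : d i (s n - L) ∈ Submodule.map (d i) (I ^ n • ⊤ : Submodule O (C i)) :=
        Submodule.mem_map_of_mem hm
      rw [this] at h2
      exact Submodule.smul_mono le_rfl le_top h2
    · exact Submodule.smul_mem_smul
        (Ideal.pow_mem_pow (Ideal.mem_span_singleton_self π) n) Submodule.mem_top
  exact sub_eq_zero.mp this
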